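/- Single-step regret bound for relaxed mirror prox: under (1/η)-relaxed relative Lipschitzness of g w.r.t. r, if w = argmin_{w'∈Z} ⟨ηg(z), w'⟩ + V^r_z(w') and z⁺ = argmin_{w'∈Z} ⟨(η/2)g(w), w'⟩ + V^r_z(w'), then for all u ∈ Z, η⟨g(w), w - u⟩ ≤ 2V^r_z(u) - 2V^r_{z⁺}(u). -/
import Mathlib


open scoped RealInnerProductSpace

/-- Single-step regret bound for relaxed mirror prox. -/
theorem relaxed_mirror_prox_step {n : ℕ}
    (Z : Set (EuclideanSpace ℝ (Fin n))) (hZ : Convex ℝ Z) (hZc : IsCompact Z)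
    (r : EuclideanSpace ℝ (Fin n) → ℝ)
    (r' : EuclideanSpace ℝ (Fin n) → EuclideanSpace ℝ (Fin n))
    (hconv : ConvexOn ℝ Z r)
    (hdiff : ∀ x ∈ Z, HasGradientAt r (r' x) x)
    (V : EuclideanSpace ℝ (Fin n) → EuclideanSpace ℝ (Fin n) → ℝ)
    (hV : ∀ x x', V x x' = r x' - r x - ⟪r' x, x' - x⟫)
    (g : EuclideanSpace ℝ (Fin n) → EuclideanSpace ℝ (Fin n))
    (η : ℝ) (hη : 0 < η)
    (hrrl : ∀ z ∈ Z, ∀ z' ∈ Z, ∀ zp ∈ Z,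
      η * ⟪g z' - g z, z' - zp⟫ ≤ V z z' + V z' zp + V z zp)
    (z w zp : EuclideanSpace ℝ (Fin n))
    (hzmem : z ∈ Z) (hwmem : w ∈ Z) (hzpmem : zp ∈ Z)
    (hwopt : ∀ u ∈ Z, 0 ≤ ⟪η • g z + r' w - r' z, u - w⟫)
    (hzpopt : ∀ u ∈ Z, 0 ≤ ⟪(η / 2) • g w + r' zp - r' z, u - zp⟫) :
    ∀ u ∈ Z, η * ⟪g w, w - u⟫ ≤ 2 * V z u - 2 * V zp u := by
  intro u hu
  have h1 := hzpopt u hu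
  have h2 := hwopt zp hzpmem
  have h3 := hrrl z hzmem w hwmem zp hzpmem
  simp only [hV, inner_add_left, inner_sub_left, inner_sub_right, real_inner_smul_left] at h1 h2 h3 ⊢
  ring_nf at h1 h2 h3 ⊢
  linarith
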